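/- Let n ≥ 3, let U be a complex vector space of dimension n with a nondegenerate symmetric bilinear form B, let W be a finite-dimensional complex vector space, and let τ : (U ⊗ W) × (U ⊗ W) → ℂ be a bilinear form such that for all x₁, u₁, v₁, z₁ ∈ U and x₂, u₂ ∈ W: 0 = τ(x₁⊗x₂, v₁⊗u₂)B(u₁,z₁) + τ(u₁⊗u₂, v₁⊗x₂)B(x₁,z₁) + τ(x₁⊗x₂, z₁⊗u₂)B(v₁,u₁) + τ(u₁⊗u₂, z₁⊗x₂)B(v₁,x₁) − τ(x₁⊗x₂, u₁⊗u₂)B(v₁,z₁) − τ(u₁⊗u₂, x₁⊗x₂)B(v₁,z₁). Then there exists an alternating bilinear form w on W such that τ(x₁⊗x₂, u₁⊗u₂) = B(x₁,u₁)·w(x₂,u₂) for all x₁, u₁ ∈ U and x₂, u₂ ∈ W. -/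

import Mathlib

open TensorProduct

theorem stmt19 {U W : Type*}
    [AddCommGroup U] [Module ℂ U] [FiniteDimensional ℂ U]
    [AddCommGroup W] [Module ℂ W] [FiniteDimensional ℂ W]
    (n : ℕ) (hn : 3 ≤ n) (hdimU : Module.finrank ℂ U = n)
    (B : U →ₗ[ℂ] U →ₗ[ℂ] ℂ)
    (hBsymm : ∀ x y : U, B x y = B y x)
    (hBnd : ∀ x : U, (∀ y : U, B x y = 0) → x = 0)
    (τ : (U ⊗[ℂ] W) →ₗ[ℂ] (U ⊗[ℂ] W) →ₗ[ℂ] ℂ)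
    (hτ : ∀ (x₁ u₁ v₁ z₁ : U) (x₂ u₂ : W),
      0 = τ (x₁ ⊗ₜ[ℂ] x₂) (v₁ ⊗ₜ[ℂ] u₂) * B u₁ z₁
        + τ (u₁ ⊗ₜ[ℂ] u₂) (v₁ ⊗ₜ[ℂ] x₂) * B x₁ z₁
        + τ (x₁ ⊗ₜ[ℂ] x₂) (z₁ ⊗ₜ[ℂ] u₂) * B v₁ u₁
        + τ (u₁ ⊗ₜ[ℂ] u₂) (z₁ ⊗ₜ[ℂ] x₂) * B v₁ x₁
        - τ (x₁ ⊗ₜ[ℂ] x₂) (u₁ ⊗ₜ[ℂ] u₂) * B v₁ z₁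
        - τ (u₁ ⊗ₜ[ℂ] u₂) (x₁ ⊗ₜ[ℂ] x₂) * B v₁ z₁) :
    ∃ w : W →ₗ[ℂ] W →ₗ[ℂ] ℂ,
      (∀ x : W, w x x = 0) ∧
      ∀ (x₁ u₁ : U) (x₂ u₂ : W),
        τ (x₁ ⊗ₜ[ℂ] x₂) (u₁ ⊗ₜ[ℂ] u₂) = B x₁ u₁ * w x₂ u₂ := by
  classical
  have hB : LinearMap.BilinForm.Nondegenerate B :=
    ⟨hBnd, fun y hy => hBnd y fun x => (hBsymm y x).trans (hy x)⟩
  have b : Module.Basis (Fin n) ℂ U := Module.finBasisOfFinrankEq ℂ U hdimU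
  set d : Module.Basis (Fin n) ℂ U := LinearMap.BilinForm.dualBasis B hB b with hd_def
  have hd : ∀ i j, B (d i) (b j) = if j = i then 1 else 0 :=
    LinearMap.BilinForm.apply_dualBasis_left hB b
  -- cast facts
  have hn0 : ((n : ℂ)) ≠ 0 := Nat.cast_ne_zero.mpr (by omega)
  have hn2 : ((2 : ℂ) - (n : ℂ)) ≠ 0 :=
    sub_ne_zero.mpr (by exact_mod_cast (by omega : 2 ≠ n))
  have hnp2 : ((n : ℂ) + 2) ≠ 0 := by
    have h := Nat.cast_ne_zero (R := ℂ).mpr (by omega : n + 2 ≠ 0)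
    push_cast at h
    exact h
  -- trace of B
  have hC : ∑ i, B (d i) (b i) = (n : ℂ) := by
    simp [hd]
  -- dual basis representation
  have hrep : ∀ (u : U) (i : Fin n), B (d i) u = b.repr u i := by
    intro u i
    conv_lhs => rw [← b.sum_repr u]
    simp only [map_sum, map_smul, smul_eq_mul, hd, mul_ite, mul_one, mul_zero,
      Finset.sum_ite_eq', Finset.mem_univ, if_true]
  -- reproducing identities
  have hA : ∀ (ψ : U →ₗ[ℂ] ℂ) (u : U), ∑ i, ψ (d i) * B u (b i) = ψ u := by
    intro ψ u
    conv_rhs => rw [← d.sum_repr u]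
    rw [map_sum]
    simp only [map_smul, smul_eq_mul, hd_def, LinearMap.BilinForm.dualBasis_repr_apply]
    exact Finset.sum_congr rfl fun i _ => mul_comm _ _
  have hA2 : ∀ (ψ : U →ₗ[ℂ] ℂ) (u : U), ∑ i, ψ (b i) * B (d i) u = ψ u := by
    intro ψ u
    conv_rhs => rw [← b.sum_repr u]
    rw [map_sum]
    simp only [map_smul, smul_eq_mul, hrep]
    exact Finset.sum_congr rfl fun i _ => mul_comm _ _
  -- the partial application of τ in its second slot, first tensor factor
  set Ψ : (U ⊗[ℂ] W) → W → (U →ₗ[ℂ] ℂ) :=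
    fun a c => (τ a).comp ((TensorProduct.mk ℂ U W).flip c) with hΨ_def
  have hΨ : ∀ (a : U ⊗[ℂ] W) (c : W) (y : U), Ψ a c y = τ a (y ⊗ₜ[ℂ] c) := by
    intro a c y; rfl
  -- Step 1: antisymmetry under full swap
  have h1 : ∀ (x₂ u₂ : W) (x u : U),
      τ (u ⊗ₜ[ℂ] u₂) (x ⊗ₜ[ℂ] x₂) = - τ (x ⊗ₜ[ℂ] x₂) (u ⊗ₜ[ℂ] u₂) := by
    intro x₂ u₂ x u
    have hsum : (0 : ℂ) = ∑ i : Fin n,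
        (τ (x ⊗ₜ[ℂ] x₂) (d i ⊗ₜ[ℂ] u₂) * B u (b i)
          + τ (u ⊗ₜ[ℂ] u₂) (d i ⊗ₜ[ℂ] x₂) * B x (b i)
          + τ (x ⊗ₜ[ℂ] x₂) (b i ⊗ₜ[ℂ] u₂) * B (d i) u
          + τ (u ⊗ₜ[ℂ] u₂) (b i ⊗ₜ[ℂ] x₂) * B (d i) x
          - τ (x ⊗ₜ[ℂ] x₂) (u ⊗ₜ[ℂ] u₂) * B (d i) (b i)
          - τ (u ⊗ₜ[ℂ] u₂) (x ⊗ₜ[ℂ] x₂) * B (d i) (b i)) :=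
      (Finset.sum_eq_zero fun i _ => (hτ x u (d i) (b i) x₂ u₂).symm).symm
    simp only [Finset.sum_sub_distrib, Finset.sum_add_distrib, ← Finset.mul_sum] at hsum
    have e1 : ∑ i, τ (x ⊗ₜ[ℂ] x₂) (d i ⊗ₜ[ℂ] u₂) * B u (b i)
        = τ (x ⊗ₜ[ℂ] x₂) (u ⊗ₜ[ℂ] u₂) := by
      simpa [hΨ] using hA (Ψ (x ⊗ₜ[ℂ] x₂) u₂) u
    have e2 : ∑ i, τ (u ⊗ₜ[ℂ] u₂) (d i ⊗ₜ[ℂ] x₂) * B x (b i)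
        = τ (u ⊗ₜ[ℂ] u₂) (x ⊗ₜ[ℂ] x₂) := by
      simpa [hΨ] using hA (Ψ (u ⊗ₜ[ℂ] u₂) x₂) x
    have e3 : ∑ i, τ (x ⊗ₜ[ℂ] x₂) (b i ⊗ₜ[ℂ] u₂) * B (d i) u
        = τ (x ⊗ₜ[ℂ] x₂) (u ⊗ₜ[ℂ] u₂) := by
      simpa [hΨ] using hA2 (Ψ (x ⊗ₜ[ℂ] x₂) u₂) u
    have e4 : ∑ i, τ (u ⊗ₜ[ℂ] u₂) (b i ⊗ₜ[ℂ] x₂) * B (d i) x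
        = τ (u ⊗ₜ[ℂ] u₂) (x ⊗ₜ[ℂ] x₂) := by
      simpa [hΨ] using hA2 (Ψ (u ⊗ₜ[ℂ] u₂) x₂) x
    rw [e1, e2, e3, e4, hC] at hsum
    have key : (τ (x ⊗ₜ[ℂ] x₂) (u ⊗ₜ[ℂ] u₂) + τ (u ⊗ₜ[ℂ] u₂) (x ⊗ₜ[ℂ] x₂))
        * ((2 : ℂ) - (n : ℂ)) = 0 := by linear_combination -hsum
    rcases mul_eq_zero.mp key with h | h
    · linear_combination h
    · exact absurd h hn2
  -- Step 2: substitute into hτ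
  have h2 : ∀ (x₂ u₂ : W) (x u v z : U),
      0 = τ (x ⊗ₜ[ℂ] x₂) (v ⊗ₜ[ℂ] u₂) * B u z
        - τ (v ⊗ₜ[ℂ] x₂) (u ⊗ₜ[ℂ] u₂) * B x z
        + τ (x ⊗ₜ[ℂ] x₂) (z ⊗ₜ[ℂ] u₂) * B v u
        - τ (z ⊗ₜ[ℂ] x₂) (u ⊗ₜ[ℂ] u₂) * B v x := by
    intro x₂ u₂ x u v z
    have h := hτ x u v z x₂ u₂
    rw [h1 x₂ u₂ v u, h1 x₂ u₂ z u, h1 x₂ u₂ x u] at h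
    linear_combination h
  -- Step 3: contraction giving the trace identity
  have h3 : ∀ (x₂ u₂ : W) (x v : U),
      0 = τ (x ⊗ₜ[ℂ] x₂) (v ⊗ₜ[ℂ] u₂) * (n : ℂ)
        - τ (v ⊗ₜ[ℂ] x₂) (x ⊗ₜ[ℂ] u₂)
        + τ (x ⊗ₜ[ℂ] x₂) (v ⊗ₜ[ℂ] u₂)
        - (∑ i, τ (b i ⊗ₜ[ℂ] x₂) (d i ⊗ₜ[ℂ] u₂)) * B v x := by
    intro x₂ u₂ x v
    have hsum : (0 : ℂ) = ∑ i : Fin n,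
        (τ (x ⊗ₜ[ℂ] x₂) (v ⊗ₜ[ℂ] u₂) * B (d i) (b i)
          - τ (v ⊗ₜ[ℂ] x₂) (d i ⊗ₜ[ℂ] u₂) * B x (b i)
          + τ (x ⊗ₜ[ℂ] x₂) (b i ⊗ₜ[ℂ] u₂) * B v (d i)
          - τ (b i ⊗ₜ[ℂ] x₂) (d i ⊗ₜ[ℂ] u₂) * B v x) :=
      (Finset.sum_eq_zero fun i _ => (h2 x₂ u₂ x (d i) v (b i)).symm).symm
    simp only [Finset.sum_sub_distrib, Finset.sum_add_distrib, ← Finset.mul_sum,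
      ← Finset.sum_mul] at hsum
    have e2 : ∑ i, τ (v ⊗ₜ[ℂ] x₂) (d i ⊗ₜ[ℂ] u₂) * B x (b i)
        = τ (v ⊗ₜ[ℂ] x₂) (x ⊗ₜ[ℂ] u₂) := by
      simpa [hΨ] using hA (Ψ (v ⊗ₜ[ℂ] x₂) u₂) x
    have e3 : ∑ i, τ (x ⊗ₜ[ℂ] x₂) (b i ⊗ₜ[ℂ] u₂) * B v (d i)
        = τ (x ⊗ₜ[ℂ] x₂) (v ⊗ₜ[ℂ] u₂) := by
      have := hA2 (Ψ (x ⊗ₜ[ℂ] x₂) u₂) v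
      simp only [hΨ] at this
      rw [← this]
      exact Finset.sum_congr rfl fun i _ => by rw [hBsymm v (d i)]
    rw [hC, e2, e3] at hsum
    linear_combination hsum
  -- Step 4: proportionality with the trace
  have h5 : ∀ (x₂ u₂ : W) (x v : U),
      (n : ℂ) * τ (x ⊗ₜ[ℂ] x₂) (v ⊗ₜ[ℂ] u₂)
        = (∑ i, τ (b i ⊗ₜ[ℂ] x₂) (d i ⊗ₜ[ℂ] u₂)) * B x v := by
    intro x₂ u₂ x v
    have ha := h3 x₂ u₂ x v
    have hb := h3 x₂ u₂ v x
    have hsym : τ (x ⊗ₜ[ℂ] x₂) (v ⊗ₜ[ℂ] u₂) = τ (v ⊗ₜ[ℂ] x₂) (x ⊗ₜ[ℂ] u₂) := by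
      have key : (τ (x ⊗ₜ[ℂ] x₂) (v ⊗ₜ[ℂ] u₂) - τ (v ⊗ₜ[ℂ] x₂) (x ⊗ₜ[ℂ] u₂))
          * ((n : ℂ) + 2) = 0 := by
        linear_combination hb - ha + (∑ i, τ (b i ⊗ₜ[ℂ] x₂) (d i ⊗ₜ[ℂ] u₂)) * hBsymm v x
      rcases mul_eq_zero.mp key with h | h
      · linear_combination h
      · exact absurd h hnp2
    linear_combination - ha - hsym + (∑ i, τ (b i ⊗ₜ[ℂ] x₂) (d i ⊗ₜ[ℂ] u₂)) * hBsymm v x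
  -- Define w
  refine ⟨LinearMap.mk₂ ℂ
    (fun x₂ u₂ => (n : ℂ)⁻¹ * ∑ i, τ (b i ⊗ₜ[ℂ] x₂) (d i ⊗ₜ[ℂ] u₂))
    (fun x y u => by
      simp [tmul_add, mul_add, Finset.sum_add_distrib, Finset.mul_sum])
    (fun c x u => by
      simp [tmul_smul, Finset.mul_sum, Finset.smul_sum, mul_left_comm])
    (fun x y u => by
      simp [tmul_add, mul_add, Finset.sum_add_distrib, Finset.mul_sum])
    (fun c x u => by
      simp [tmul_smul, Finset.mul_sum, Finset.smul_sum, mul_left_comm]), ?_, ?_⟩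
  · -- alternating
    intro x
    simp only [LinearMap.mk₂_apply]
    have hzero : ∀ a c : U, τ (a ⊗ₜ[ℂ] x) (c ⊗ₜ[ℂ] x) = 0 := by
      intro a c
      have hs : τ (a ⊗ₜ[ℂ] x) (c ⊗ₜ[ℂ] x) = τ (c ⊗ₜ[ℂ] x) (a ⊗ₜ[ℂ] x) := by
        have ha := h5 x x a c
        have hb := h5 x x c a
        have h0 : (n : ℂ) * (τ (a ⊗ₜ[ℂ] x) (c ⊗ₜ[ℂ] x) - τ (c ⊗ₜ[ℂ] x) (a ⊗ₜ[ℂ] x)) = 0 := by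
          linear_combination ha - hb + (∑ i, τ (b i ⊗ₜ[ℂ] x) (d i ⊗ₜ[ℂ] x)) * hBsymm a c
        rcases mul_eq_zero.mp h0 with h | h
        · exact absurd h hn0
        · linear_combination h
      have han := h1 x x a c
      linear_combination (hs + han) / 2
    simp [hzero]
  · -- the formula
    intro x₁ u₁ x₂ u₂
    simp only [LinearMap.mk₂_apply]
    have := h5 x₂ u₂ x₁ u₁
    field_simp
    linear_combination this
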